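/- Let 0 < τ < 1 and define E_τ = {a > 0 : a = sup{x : λ^∞(x) = λ^∞(a)}}, where λ^∞(a) = (N_a/⌈N_a a⌉) log 2 and N_a = min{k ≥ 1 : k·a ∈ [τ,1]+ℕ}. Then E_τ is a discrete subset of (0,∞): every a ∈ E_τ has a neighborhood containing no other point of E_τ. -/

import Mathlib

open Real Set

set_option maxHeartbeats 1000000

/-- `W_τ = [τ,1] + ℕ`. -/
def Wset (τ : ℝ) : Set ℝ := {x | ∃ n : ℕ, (n : ℝ) + τ ≤ x ∧ x ≤ (n : ℝ) + 1}

/-- `N_a = min {k ≥ 1 : k·a ∈ W_τ}`. -/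
noncomputable def Nmin (τ a : ℝ) : ℕ := sInf {k : ℕ | 1 ≤ k ∧ (k : ℝ) * a ∈ Wset τ}

/-- `λ^∞(a) = (N_a / ⌈N_a a⌉) log 2`. -/
noncomputable def lamInf (τ a : ℝ) : ℝ :=
  ((Nmin τ a : ℝ) / ((⌈(Nmin τ a : ℝ) * a⌉ : ℤ) : ℝ)) * Real.log 2

lemma notW_of_lt (τ : ℝ) {y y' : ℝ} (h1 : y ≤ y') (h2 : y' < (⌈y⌉ : ℝ) - 1 + τ) :
    y' ∉ Wset τ := by
  rintro ⟨n, hn1, hn2⟩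
  have h3 : ((n : ℤ) : ℝ) < ((⌈y⌉ - 1 : ℤ) : ℝ) := by push_cast; linarith
  have h4 : (n : ℤ) < ⌈y⌉ - 1 := by exact_mod_cast h3
  have h5 : ((n : ℝ) + 1) ≤ (⌈y⌉ : ℝ) - 1 := by
    have h4' : (n : ℤ) + 1 ≤ ⌈y⌉ - 1 := h4
    exact_mod_cast h4'
  have h6 : (⌈y⌉ : ℝ) - 1 < y := by have := Int.ceil_lt_add_one y; linarith
  linarith

lemma memW_of_ceil (τ : ℝ) {y : ℝ} (hy : 0 < y) (h : (⌈y⌉ : ℝ) - 1 + τ ≤ y) :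
    y ∈ Wset τ := by
  have h1 : 1 ≤ ⌈y⌉ := by
    have : (0 : ℤ) < ⌈y⌉ := Int.lt_ceil.mpr (by exact_mod_cast hy)
    omega
  have hcast : (((⌈y⌉ - 1).toNat : ℕ) : ℝ) = (⌈y⌉ : ℝ) - 1 := by
    have h2 : ((⌈y⌉ - 1).toNat : ℤ) = ⌈y⌉ - 1 := Int.toNat_of_nonneg (by omega)
    exact_mod_cast congrArg (fun z : ℤ => (z : ℝ)) h2
  refine ⟨(⌈y⌉ - 1).toNat, ?_, ?_⟩
  · rw [hcast]; linarith
  · rw [hcast]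
    have := Int.le_ceil y
    linarith

lemma natW (τ : ℝ) (hτ1 : τ ≤ 1) {m : ℕ} (hm : 1 ≤ m) : ((m : ℝ)) ∈ Wset τ := by
  refine ⟨m - 1, ?_, ?_⟩ <;> rw [Nat.cast_sub hm] <;> push_cast <;> linarith

lemma margin_pos (τ : ℝ) {y : ℝ} (hy : 0 < y) (h : y ∉ Wset τ) :
    0 < (⌈y⌉ : ℝ) - 1 + τ - y := by
  by_contra hc
  exact h (memW_of_ceil τ hy (by linarith))

lemma exists_pos_le_finset (s : Finset ℕ) (f : ℕ → ℝ) (h : ∀ k ∈ s, 0 < f k) :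
    ∃ η > 0, ∀ k ∈ s, η ≤ f k := by
  rcases s.eq_empty_or_nonempty with rfl | hs
  · exact ⟨1, one_pos, by simp⟩
  · obtain ⟨k0, hk0, hmin⟩ := s.exists_min_image f hs
    exact ⟨f k0, h k0 hk0, fun k hk => hmin k hk⟩

lemma keyA (τ : ℝ) (hτ0 : 0 < τ) (hτ1 : τ < 1) (a : ℝ) (ha0 : 0 < a)
    (ha : a = sSup {x : ℝ | 0 < x ∧ lamInf τ x = lamInf τ a}) :
    ∃ N m : ℕ, 1 ≤ N ∧ (N : ℝ) * (1 - τ) < 1 ∧ (N : ℝ) * a = (m : ℝ) := by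
  set L := {x : ℝ | 0 < x ∧ lamInf τ x = lamInf τ a} with hL
  have haL : a ∈ L := ⟨ha0, rfl⟩
  have hbdd : BddAbove L := by
    by_contra hb
    rw [Real.sSup_of_not_bddAbove hb] at ha
    linarith
  have hub : ∀ x ∈ L, x ≤ a := fun x hx => ha ▸ le_csSup hbdd hx
  set S := {k : ℕ | 1 ≤ k ∧ (k : ℝ) * a ∈ Wset τ} with hSdef
  have hS : S.Nonempty := by
    by_contra hSe
    rw [Set.not_nonempty_iff_eq_empty] at hSe
    have hN0 : Nmin τ a = 0 := by rw [Nmin, ← hSdef, hSe, Nat.sInf_empty]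
    have hlam0 : lamInf τ a = 0 := by rw [lamInf, hN0]; simp
    have hS1 : {k : ℕ | 1 ≤ k ∧ (k : ℝ) * (a + 1) ∈ Wset τ} = ∅ := by
      rw [Set.eq_empty_iff_forall_notMem]
      rintro k ⟨hk1, n, hn1, hn2⟩
      have hkpos : (0:ℝ) < (k:ℝ) := by exact_mod_cast hk1
      have hka : (0 : ℝ) < (k : ℝ) * a := by positivity
      have hkn : k ≤ n := by
        have h1 : (k : ℝ) < (n : ℝ) + 1 := by nlinarith
        have h2 : (k : ℕ) < n + 1 := by exact_mod_cast h1
        omega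
      have hmem : (k : ℝ) * a ∈ Wset τ := by
        refine ⟨n - k, ?_, ?_⟩ <;> rw [Nat.cast_sub hkn] <;> nlinarith
      exact absurd (show k ∈ S from ⟨hk1, hmem⟩) (by rw [hSe]; exact Set.notMem_empty k)
    have hN1 : Nmin τ (a + 1) = 0 := by rw [Nmin, hS1, Nat.sInf_empty]
    have hlam1 : lamInf τ (a + 1) = 0 := by rw [lamInf, hN1]; simp
    have hmem1 : a + 1 ∈ L := ⟨by linarith, by rw [hlam1, hlam0]⟩
    have := hub _ hmem1
    linarith
  set N := Nmin τ a with hNdef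
  have hNS : N ∈ S := Nat.sInf_mem hS
  have hN1 : 1 ≤ N := hNS.1
  have hNpos : (0:ℝ) < (N:ℝ) := by exact_mod_cast hN1
  obtain ⟨n, hn1, hn2⟩ := hNS.2
  have hceil : ⌈(N : ℝ) * a⌉ = (n : ℤ) + 1 := by
    have h1 : (n : ℤ) < ⌈(N : ℝ) * a⌉ := Int.lt_ceil.mpr (by push_cast; linarith)
    have h2 : ⌈(N : ℝ) * a⌉ ≤ (n : ℤ) + 1 := Int.ceil_le.mpr (by push_cast; linarith)
    omega
  -- Step: N*a = n+1
  have hint : (N : ℝ) * a = (n : ℝ) + 1 := by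
    by_contra hne
    have hlt : (N : ℝ) * a < (n : ℝ) + 1 := lt_of_le_of_ne hn2 hne
    have hmar : ∀ k ∈ Finset.Ico 1 N, 0 < (⌈(k : ℝ) * a⌉ : ℝ) - 1 + τ - (k : ℝ) * a := by
      intro k hk
      rw [Finset.mem_Ico] at hk
      have hknot : k ∉ S := Nat.notMem_of_lt_sInf hk.2
      have hkW : (k : ℝ) * a ∉ Wset τ := fun h => hknot ⟨hk.1, h⟩
      have hkpos : (0:ℝ) < (k:ℝ) := by exact_mod_cast hk.1
      exact margin_pos τ (by positivity) hkW
    obtain ⟨η, hη0, hηle⟩ := exists_pos_le_finset _ _ hmar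
    set t := min η ((n : ℝ) + 1 - (N : ℝ) * a) / (2 * (N : ℝ)) with ht
    have hmin0 : 0 < min η ((n : ℝ) + 1 - (N : ℝ) * a) := lt_min hη0 (by linarith)
    have ht0 : 0 < t := by positivity
    have hEq : (N : ℝ) * t = min η ((n : ℝ) + 1 - (N : ℝ) * a) / 2 := by
      rw [ht]; field_simp
    have hNt : (N : ℝ) * t < (n : ℝ) + 1 - (N : ℝ) * a := by
      rw [hEq]
      have := min_le_right η ((n : ℝ) + 1 - (N : ℝ) * a)
      linarith
    set x := a + t with hx
    have hx0 : 0 < x := by linarith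
    have hout : ∀ k, 1 ≤ k → k < N → (k : ℝ) * x ∉ Wset τ := by
      intro k h1k h2k
      have hkmem : k ∈ Finset.Ico 1 N := Finset.mem_Ico.mpr ⟨h1k, h2k⟩
      have hηk := hηle k hkmem
      have hkN : (k : ℝ) ≤ (N : ℝ) := by exact_mod_cast Nat.le_of_lt h2k
      have hkpos : (0:ℝ) < (k:ℝ) := by exact_mod_cast h1k
      have hkt : (k : ℝ) * t < η := by
        have h2 : (k:ℝ) * t ≤ (N:ℝ) * t := by nlinarith
        have h4 := min_le_left η ((n : ℝ) + 1 - (N : ℝ) * a)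
        rw [hEq] at h2
        linarith
      apply notW_of_lt τ (y := (k : ℝ) * a)
      · nlinarith
      · have hsplit : (k:ℝ) * x = (k:ℝ) * a + (k:ℝ) * t := by rw [hx]; ring
        rw [hsplit]; linarith
    have hNx1 : (n : ℝ) + τ ≤ (N : ℝ) * x := by
      have hsplit : (N:ℝ) * x = (N:ℝ) * a + (N:ℝ) * t := by rw [hx]; ring
      nlinarith
    have hNx2 : (N : ℝ) * x < (n : ℝ) + 1 := by
      have hsplit : (N:ℝ) * x = (N:ℝ) * a + (N:ℝ) * t := by rw [hx]; ring
      linarith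
    have hNxW : (N : ℝ) * x ∈ Wset τ := ⟨n, hNx1, le_of_lt hNx2⟩
    have hNmem : N ∈ {k : ℕ | 1 ≤ k ∧ (k : ℝ) * x ∈ Wset τ} := ⟨hN1, hNxW⟩
    have hNminx : Nmin τ x = N := by
      have hle : Nmin τ x ≤ N := Nat.sInf_le hNmem
      rcases Nat.lt_or_ge (Nmin τ x) N with hlt2 | hge
      · exfalso
        have hmem := Nat.sInf_mem (⟨N, hNmem⟩ : Set.Nonempty _)
        exact hout _ hmem.1 hlt2 hmem.2
      · omega
    have hceilx : ⌈(N : ℝ) * x⌉ = (n : ℤ) + 1 := by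
      have h1 : (n : ℤ) < ⌈(N : ℝ) * x⌉ := Int.lt_ceil.mpr (by push_cast; linarith)
      have h2 : ⌈(N : ℝ) * x⌉ ≤ (n : ℤ) + 1 := Int.ceil_le.mpr (by push_cast; linarith)
      omega
    have hlamx : lamInf τ x = lamInf τ a := by
      rw [lamInf, lamInf, hNminx, ← hNdef, hceilx, hceil]
    have hmemx : x ∈ L := ⟨hx0, hlamx⟩
    have := hub _ hmemx
    linarith
  refine ⟨N, n + 1, hN1, ?_, by push_cast; linarith⟩
  set m := n + 1 with hm
  have hma : (N : ℝ) * a = (m : ℝ) := by rw [hm]; push_cast; linarith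
  have hm1 : 1 ≤ m := Nat.le_add_left 1 n
  have hcop : Nat.Coprime m N := by
    by_contra hc
    set d := Nat.gcd m N with hd
    have hdN : d ∣ N := Nat.gcd_dvd_right m N
    have hdm : d ∣ m := Nat.gcd_dvd_left m N
    have hd0 : d ≠ 0 := by
      intro h0
      rw [hd] at h0
      have := Nat.eq_zero_of_gcd_eq_zero_right h0
      omega
    have hd2 : 2 ≤ d := by
      rcases Nat.lt_or_ge d 2 with h | h
      · exfalso
        have hd1 : d = 1 := by omega
        exact hc (Nat.coprime_iff_gcd_eq_one.mpr (by rw [← hd, hd1]))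
      · exact h
    set k := N / d with hk
    have hk1 : 1 ≤ k := (Nat.one_le_div_iff (by omega)).mpr (Nat.le_of_dvd (by omega) hdN)
    have hkN : k < N := Nat.div_lt_self (by omega) hd2
    have hdpos : (0:ℝ) < (d:ℝ) := by exact_mod_cast Nat.pos_of_ne_zero hd0
    have hka : (k : ℝ) * a = ((m / d : ℕ) : ℝ) := by
      have h1 : ((k : ℕ) : ℝ) * ((d : ℕ) : ℝ) = (N : ℝ) := by
        exact_mod_cast congrArg (fun z : ℕ => (z : ℝ)) (Nat.div_mul_cancel hdN)
      have h2 : ((m / d : ℕ) : ℝ) * ((d : ℕ) : ℝ) = (m : ℝ) := by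
        exact_mod_cast congrArg (fun z : ℕ => (z : ℝ)) (Nat.div_mul_cancel hdm)
      nlinarith [hma]
    have hmd1 : 1 ≤ m / d := (Nat.one_le_div_iff (by omega)).mpr (Nat.le_of_dvd (by omega) hdm)
    have hkS : k ∈ S := ⟨hk1, by rw [hka]; exact natW τ (le_of_lt hτ1) hmd1⟩
    exact absurd hkS (Nat.notMem_of_lt_sInf hkN)
  rcases Nat.lt_or_ge N 2 with hN2 | hN2
  · have : N = 1 := by omega
    rw [this]; norm_num; linarith
  -- N ≥ 2
  by_contra hcon
  push_neg at hcon
  have hτN : (N : ℝ) * τ ≤ (N : ℝ) - 1 := by nlinarith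
  haveI : NeZero N := ⟨by omega⟩
  haveI : Fact (1 < N) := ⟨by omega⟩
  set km : ZMod N := (-1) * (m : ZMod N)⁻¹ with hkmdef
  set k := km.val with hkdef
  have hkN : k < N := ZMod.val_lt km
  have hmunit : (m : ZMod N) * (m : ZMod N)⁻¹ = 1 := ZMod.coe_mul_inv_eq_one m hcop
  have hkcast : ((k : ℕ) : ZMod N) = km := ZMod.natCast_rightInverse km
  have hkm : ((k * m : ℕ) : ZMod N) = -1 := by
    rw [Nat.cast_mul, hkcast, hkmdef]
    calc (-1 : ZMod N) * (m : ZMod N)⁻¹ * (m : ZMod N)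
        = -1 * ((m : ZMod N) * (m : ZMod N)⁻¹) := by ring
      _ = -1 := by rw [hmunit]; ring
  have hk1 : 1 ≤ k := by
    rcases Nat.eq_zero_or_pos k with h0 | h
    · exfalso
      have hkm0 : km = 0 := (ZMod.val_eq_zero km).mp h0
      have hbad : (-1 : ZMod N) = 0 := by
        calc (-1 : ZMod N) = -1 * ((m : ZMod N)⁻¹ * (m : ZMod N)) := by
              rw [mul_comm ((m : ZMod N)⁻¹) _, hmunit]; ring
          _ = km * (m : ZMod N) := by rw [hkmdef]; ring
          _ = 0 := by rw [hkm0, zero_mul]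
      have h1 : (1 : ZMod N) = 0 := by
        have := neg_eq_zero.mp hbad
        exact this
      exact one_ne_zero h1
    · exact h
  have hmod : (k * m) % N = N - 1 := by
    have hNm1 : ((N - 1 : ℕ) : ZMod N) = -1 := by
      have : ((N - 1 : ℕ) : ZMod N) = (N : ZMod N) - 1 := by
        rw [Nat.cast_sub hN1, Nat.cast_one]
      rw [this, ZMod.natCast_self]; ring
    have h1 : ((k * m : ℕ) : ZMod N).val = (k * m) % N := ZMod.val_natCast _ _
    have h2 : ((N - 1 : ℕ) : ZMod N).val = (N - 1) % N := ZMod.val_natCast _ _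
    rw [hkm] at h1
    rw [hNm1] at h2
    rw [Nat.mod_eq_of_lt (by omega)] at h2
    omega
  have hadef : a = (m : ℝ) / (N : ℝ) := by
    rw [eq_div_iff (ne_of_gt hNpos)]; linarith [hma]
  set q := (k * m) / N with hq
  have hdiv : k * m = N * q + (N - 1) := by
    have h := Nat.div_add_mod (k * m) N
    rw [hmod] at h
    exact h.symm
  have hmR : (m : ℝ) = (n : ℝ) + 1 := by rw [hm]; push_cast; ring
  have hdivR : (k : ℝ) * (m : ℝ) = (N : ℝ) * (q : ℝ) + ((N : ℝ) - 1) := by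
    have h1 : ((k * m : ℕ) : ℝ) = ((N * q + (N - 1) : ℕ) : ℝ) := by exact_mod_cast hdiv
    rw [Nat.cast_add, Nat.cast_mul, Nat.cast_sub hN1, Nat.cast_one] at h1
    rw [hmR] at h1 ⊢
    push_cast at h1 ⊢
    linarith
  have hkaval : (k : ℝ) * a = (q : ℝ) + ((N : ℝ) - 1) / (N : ℝ) := by
    rw [hadef]
    field_simp
    linarith [hdivR]
  have hkaW : (k : ℝ) * a ∈ Wset τ := by
    refine ⟨q, ?_, ?_⟩
    · rw [hkaval]
      have : τ ≤ ((N : ℝ) - 1) / (N : ℝ) := by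
        rw [le_div_iff₀ hNpos]; nlinarith
      linarith
    · rw [hkaval]
      have : ((N : ℝ) - 1) / (N : ℝ) ≤ 1 := by
        rw [div_le_one hNpos]; linarith
      linarith
  exact absurd (⟨hk1, hkaW⟩ : k ∈ S) (Nat.notMem_of_lt_sInf hkN)

theorem stmt_6 (τ : ℝ) (hτ0 : 0 < τ) (hτ1 : τ < 1) :
    ∀ a ∈ {a : ℝ | 0 < a ∧ a = sSup {x : ℝ | 0 < x ∧ lamInf τ x = lamInf τ a}},
      ∃ ε > 0, ∀ b ∈ {a : ℝ | 0 < a ∧ a = sSup {x : ℝ | 0 < x ∧ lamInf τ x = lamInf τ a}},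
        |b - a| < ε → b = a := by
  intro a ha
  obtain ⟨N, m, hN1, hNτ, hNa⟩ := keyA τ hτ0 hτ1 a ha.1 ha.2
  refine ⟨(1 - τ)^2, pow_pos (by linarith) 2, ?_⟩
  intro b hb hab
  obtain ⟨N', m', hN1', hNτ', hNb⟩ := keyA τ hτ0 hτ1 b hb.1 hb.2
  by_contra hne
  have hNpos : (0:ℝ) < (N:ℝ) := by exact_mod_cast hN1
  have hN'pos : (0:ℝ) < (N':ℝ) := by exact_mod_cast hN1'
  have hτpos : (0:ℝ) < 1 - τ := by linarith
  have hz : (N : ℝ) * (N' : ℝ) * (b - a) = (((N : ℤ) * (m' : ℤ) - (N' : ℤ) * (m : ℤ) : ℤ) : ℝ) := by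
    push_cast
    linear_combination (N : ℝ) * hNb - (N' : ℝ) * hNa
  set z : ℤ := (N : ℤ) * (m' : ℤ) - (N' : ℤ) * (m : ℤ) with hzdef
  have hzne : z ≠ 0 := by
    intro h0
    rw [h0] at hz
    push_cast at hz
    have hba : b - a = 0 := by
      have hNN : (0:ℝ) < (N:ℝ) * (N':ℝ) := by positivity
      rcases mul_eq_zero.mp hz with h | h
      · exact absurd h (ne_of_gt hNN)
      · exact h
    exact hne (by linarith)
  have hz1 : (1 : ℝ) ≤ |(z : ℝ)| := by
    have h1 : (1 : ℤ) ≤ |z| := Int.one_le_abs (by simpa using hzne)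
    exact_mod_cast h1
  have habs : |(z : ℝ)| = (N : ℝ) * (N' : ℝ) * |b - a| := by
    rw [← hz, abs_mul, abs_of_pos (by positivity : (0:ℝ) < (N:ℝ) * (N':ℝ))]
  have hprod : (N : ℝ) * (N' : ℝ) * (1 - τ)^2 < 1 := by
    have h1 : ((N:ℝ) * (1 - τ)) * ((N':ℝ) * (1 - τ)) < 1 * 1 :=
      mul_lt_mul'' hNτ hNτ' (by positivity) (by positivity)
    nlinarith
  have hlt1 : (N : ℝ) * (N' : ℝ) * |b - a| < 1 := by
    have h2 : (N : ℝ) * (N' : ℝ) * |b - a| ≤ (N : ℝ) * (N' : ℝ) * (1 - τ)^2 := by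
      apply mul_le_mul_of_nonneg_left (le_of_lt hab) (by positivity)
    linarith
  rw [habs] at hz1
  linarith
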